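/- Every topological space has a dense left-separated subspace. -/

import Mathlib

universe u

open Cardinal Set

/-- A space is `κ`-resolvable iff it has `κ` pairwise disjoint dense subsets. -/
def Resolvable (X : Type u) [TopologicalSpace X] (κ : Cardinal.{u}) : Prop :=
  ∃ (ι : Type u) (D : ι → Set X), #ι = κ ∧ (∀ i, Dense (D i)) ∧
    Pairwise (Function.onFun Disjoint D)

/-- `L` is left-separated: it has a well-ordering all of whose initial segments
are closed in the subspace `L`. -/
def LeftSeparated {X : Type u} [TopologicalSpace X] (L : Set X) : Prop :=
  ∃ r : L → L → Prop, IsWellOrder L r ∧ ∀ x : L, IsClosed {y : L | r y x}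

/-- `R` is right-separated: it has a well-ordering all of whose initial segments
are open in the subspace `R`. -/
def RightSeparated {X : Type u} [TopologicalSpace X] (R : Set X) : Prop :=
  ∃ r : R → R → Prop, IsWellOrder R r ∧ ∀ x : R, IsOpen {y : R | r y x}

/-- The dispersion character `Δ(X)`: the minimal cardinality of a nonempty open set. -/
noncomputable def dispersion (X : Type u) [TopologicalSpace X] : Cardinal.{u} :=
  sInf {c | ∃ G : Set X, IsOpen G ∧ G.Nonempty ∧ #G = c}

/-- Every topological space has a dense left-separated subspace. -/
theorem stmt2 {X : Type u} [TopologicalSpace X] :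
    ∃ L : Set X, Dense L ∧ LeftSeparated L := by
  classical
  let r : X → X → Prop := WellOrderingRel
  have hwo : IsWellOrder X r := WellOrderingRel.isWellOrder
  set L : Set X := {x | x ∉ closure {y | r y x}} with hLdef
  have key : ∀ x : X, x ∈ closure {y | y ∈ L ∧ (r y x ∨ y = x)} := by
    intro x
    induction x using hwo.wf.induction with
    | _ x ih =>
      by_cases hx : x ∈ L
      · exact subset_closure ⟨hx, Or.inr rfl⟩
      · have hx' : x ∈ closure {y | r y x} := not_not.mp hx
        have hsub : {y | r y x} ⊆ closure {y | y ∈ L ∧ (r y x ∨ y = x)} := by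
          intro y hy
          have := ih y hy
          refine closure_mono ?_ this
          rintro z ⟨hzL, hz⟩
          refine ⟨hzL, Or.inl ?_⟩
          rcases hz with hz | rfl
          · exact @IsTrans.trans _ r (by haveI := hwo; infer_instance) _ _ _ hz hy
          · exact hy
        have := closure_mono hsub hx'
        rwa [closure_closure] at this
  have hdense : Dense L := by
    intro x
    have := key x
    exact closure_mono (fun z hz => hz.1) this
  refine ⟨L, hdense, Subrel r (· ∈ L), by haveI := hwo; infer_instance, ?_⟩
  intro x
  rw [isClosed_induced_iff]
  refine ⟨closure {y | y ∈ L ∧ r y ↑x}, isClosed_closure, ?_⟩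
  ext y
  simp only [Set.mem_preimage, Set.mem_setOf_eq]
  constructor
  · intro hy
    show r ↑y ↑x
    rcases @trichotomous_of _ r (by haveI := hwo; infer_instance) (↑y) (↑x) with h | h | h
    · exact h
    · exfalso
      have : (↑y : X) ∈ closure {z | r z ↑y} := by
        refine closure_mono ?_ hy
        rintro z ⟨_, hz⟩
        rw [← h] at hz; exact hz
      exact y.2 this
    · exfalso
      have : (↑y : X) ∈ closure {z | r z ↑y} := by
        refine closure_mono ?_ hy
        rintro z ⟨_, hz⟩
        exact @IsTrans.trans _ r (by haveI := hwo; infer_instance) _ _ _ hz h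
      exact y.2 this
  · intro hy
    exact subset_closure ⟨y.2, hy⟩
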